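/- The function f(x,y) := ((√x − √y)₊)² is convex on ℝ₊²; that is, for all (x⁰,y⁰), (x¹,y¹) in [0,∞)² and all λ ∈ [0,1], ((√((1−λ)x⁰+λx¹) − √((1−λ)y⁰+λy¹))₊)² ≤ (1−λ)((√x⁰ − √y⁰)₊)² + λ((√x¹ − √y¹)₊)². -/

import Mathlib

/-- Linear lower bound: for `t ∈ (0,1]` and `x,y ≥ 0`,
`(1−t)x + (1−1/t)y ≤ ((√x − √y)₊)²`. -/
lemma key_linear_bound (t x y : ℝ) (ht0 : 0 < t) (ht1 : t ≤ 1)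
    (hx : 0 ≤ x) (hy : 0 ≤ y) :
    (1 - t) * x + (1 - 1/t) * y ≤ (max (Real.sqrt x - Real.sqrt y) 0) ^ 2 := by
  obtain ⟨a, ha, rfl⟩ : ∃ a, 0 ≤ a ∧ x = a^2 :=
    ⟨Real.sqrt x, Real.sqrt_nonneg x, (Real.sq_sqrt hx).symm⟩
  obtain ⟨b, hb, rfl⟩ : ∃ b, 0 ≤ b ∧ y = b^2 :=
    ⟨Real.sqrt y, Real.sqrt_nonneg y, (Real.sq_sqrt hy).symm⟩
  rw [Real.sqrt_sq ha, Real.sqrt_sq hb]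
  rcases le_or_gt a b with h | h
  · rw [max_eq_right (by linarith)]
    refine le_of_mul_le_mul_left ?_ ht0
    have e1 : t * ((1 - t) * a^2 + (1 - 1/t) * b^2)
        = t * (1 - t) * a^2 + (t - 1) * b^2 := by
      field_simp
    rw [e1]
    have h2 : 0 ≤ t * (1 - t) * ((b - a) * (b + a)) := by
      have := mul_nonneg ht0.le (by linarith : (0:ℝ) ≤ 1 - t)
      exact mul_nonneg this (mul_nonneg (by linarith) (by linarith))
    nlinarith [sq_nonneg ((1 - t) * b)]
  · rw [max_eq_left (by linarith)]
    refine le_of_mul_le_mul_left ?_ ht0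
    have e1 : t * ((1 - t) * a^2 + (1 - 1/t) * b^2)
        = t * (1 - t) * a^2 + (t - 1) * b^2 := by
      field_simp
    rw [e1]
    nlinarith [sq_nonneg (t * a - b)]

lemma hEq_aux (X Y : ℝ) (hXpos : 0 < X) (hYpos : 0 < Y) :
    (Real.sqrt X - Real.sqrt Y) ^ 2
      = (1 - Real.sqrt Y / Real.sqrt X) * X
        + (1 - 1 / (Real.sqrt Y / Real.sqrt X)) * Y := by
  obtain ⟨a, ha, rfl⟩ : ∃ a, 0 < a ∧ X = a^2 :=
    ⟨Real.sqrt X, Real.sqrt_pos.mpr hXpos, (Real.sq_sqrt hXpos.le).symm⟩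
  obtain ⟨b, hb, rfl⟩ : ∃ b, 0 < b ∧ Y = b^2 :=
    ⟨Real.sqrt Y, Real.sqrt_pos.mpr hYpos, (Real.sq_sqrt hYpos.le).symm⟩
  rw [Real.sqrt_sq ha.le, Real.sqrt_sq hb.le]
  field_simp
  ring

/-- the function `(x,y) ↦ ((√x − √y)₊)²` is convex on `ℝ₊²`. -/
theorem posPart_sqrt_sub_sq_convex (x₀ y₀ x₁ y₁ lam : ℝ)
    (hx₀ : 0 ≤ x₀) (hy₀ : 0 ≤ y₀) (hx₁ : 0 ≤ x₁) (hy₁ : 0 ≤ y₁)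
    (hlam₀ : 0 ≤ lam) (hlam₁ : lam ≤ 1) :
    (max (Real.sqrt ((1 - lam) * x₀ + lam * x₁)
        - Real.sqrt ((1 - lam) * y₀ + lam * y₁)) 0) ^ 2
      ≤ (1 - lam) * (max (Real.sqrt x₀ - Real.sqrt y₀) 0) ^ 2
        + lam * (max (Real.sqrt x₁ - Real.sqrt y₁) 0) ^ 2 := by
  have hl : 0 ≤ 1 - lam := by linarith
  set X := (1 - lam) * x₀ + lam * x₁ with hX
  set Y := (1 - lam) * y₀ + lam * y₁ with hY
  have hXn : 0 ≤ X := by positivity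
  have hYn : 0 ≤ Y := by positivity
  have hRHS0 : 0 ≤ (1 - lam) * (max (Real.sqrt x₀ - Real.sqrt y₀) 0) ^ 2
        + lam * (max (Real.sqrt x₁ - Real.sqrt y₁) 0) ^ 2 := by positivity
  rcases le_or_gt (Real.sqrt X) (Real.sqrt Y) with h | h
  · rw [max_eq_right (by linarith)]
    simpa using hRHS0
  · have hXpos : 0 < X := by
      by_contra hc
      push_neg at hc
      have hX0 : X = 0 := le_antisymm hc hXn
      rw [hX0, Real.sqrt_zero] at h
      exact absurd h (not_lt.mpr (Real.sqrt_nonneg Y))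
    rcases eq_or_lt_of_le hYn with hY0 | hYpos
    · -- Y = 0
      have hY0' : Y = 0 := hY0.symm
      rw [max_eq_left (by linarith), hY0', Real.sqrt_zero, sub_zero, Real.sq_sqrt hXn]
      have hsum : (1 - lam) * y₀ + lam * y₁ = 0 := hY0'
      have hy₀0 : (1 - lam) * y₀ = 0 := by
        nlinarith [mul_nonneg hl hy₀, mul_nonneg hlam₀ hy₁]
      have hy₁0 : lam * y₁ = 0 := by linarith
      have h0 : (1 - lam) * x₀ ≤ (1 - lam) * (max (Real.sqrt x₀ - Real.sqrt y₀) 0) ^ 2 := by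
        rcases eq_or_lt_of_le hl with he | hp
        · rw [← he]; simp
        · have hy0 : y₀ = 0 := (mul_eq_zero.mp hy₀0).resolve_left hp.ne'
          rw [hy0, Real.sqrt_zero, sub_zero,
            max_eq_left (Real.sqrt_nonneg _), Real.sq_sqrt hx₀]
      have h1 : lam * x₁ ≤ lam * (max (Real.sqrt x₁ - Real.sqrt y₁) 0) ^ 2 := by
        rcases eq_or_lt_of_le hlam₀ with he | hp
        · rw [← he]; simp
        · have hy1 : y₁ = 0 := (mul_eq_zero.mp hy₁0).resolve_left hp.ne'
          rw [hy1, Real.sqrt_zero, sub_zero,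
            max_eq_left (Real.sqrt_nonneg _), Real.sq_sqrt hx₁]
      linarith
    · -- Y > 0, take t = √Y/√X
      have hsX : 0 < Real.sqrt X := Real.sqrt_pos.mpr hXpos
      have hsY : 0 < Real.sqrt Y := Real.sqrt_pos.mpr hYpos
      set t := Real.sqrt Y / Real.sqrt X with ht
      have ht0 : 0 < t := div_pos hsY hsX
      have ht1 : t ≤ 1 := by
        rw [ht, div_le_one hsX]; linarith
      have hEq : (max (Real.sqrt X - Real.sqrt Y) 0) ^ 2
          = (1 - t) * X + (1 - 1/t) * Y := by
        rw [max_eq_left (by linarith), ht]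
        exact hEq_aux X Y hXpos hYpos
      rw [hEq]
      have k0 := key_linear_bound t x₀ y₀ ht0 ht1 hx₀ hy₀
      have k1 := key_linear_bound t x₁ y₁ ht0 ht1 hx₁ hy₁
      have hsplit : (1 - t) * X + (1 - 1/t) * Y
          = (1 - lam) * ((1 - t) * x₀ + (1 - 1/t) * y₀)
            + lam * ((1 - t) * x₁ + (1 - 1/t) * y₁) := by
        rw [hX, hY]; ring
      rw [hsplit]
      have g0 := mul_le_mul_of_nonneg_left k0 hl
      have g1 := mul_le_mul_of_nonneg_left k1 hlam₀
      linarith
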